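/- Let ε be a real number with 0 < ε ≤ 1, and suppose m·N ≥ n and there are at least m jobs j with p j ≥ ε·d. Then there exists a feasible assignment μ with early work X(μ) ≥ ε·m·d; in particular, the maximum early work over feasible assignments is at least ε·m·d. -/

import Mathlib

open Finset

/-- The load of machine `i` under assignment `μ`. -/
def machineLoad {n m : ℕ} (p : Fin n → ℕ) (μ : Fin n → Fin m) (i : Fin m) : ℕ :=
  ∑ j ∈ univ.filter (fun j => μ j = i), p j

/-- The early work `X(μ)` with common due date `d`. -/
def earlyWork {n m : ℕ} (p : Fin n → ℕ) (d : ℕ) (μ : Fin n → Fin m) : ℕ :=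
  ∑ i : Fin m, min (machineLoad p μ i) d

/-- Feasibility of an assignment: at most `N` jobs on each machine. -/
def Feasible {n m : ℕ} (N : ℕ) (μ : Fin n → Fin m) : Prop :=
  ∀ i : Fin m, (univ.filter (fun j => μ j = i)).card ≤ N

lemma earlyWork_le {n m : ℕ} (p : Fin n → ℕ) (d : ℕ) (μ : Fin n → Fin m) :
    earlyWork p d μ ≤ m * d := by
  calc earlyWork p d μ ≤ ∑ _i : Fin m, d :=
        Finset.sum_le_sum fun i _ => min_le_right _ _
    _ = m * d := by simp [mul_comm]

/-- if `m·N ≥ n` and there are at least `m` jobs of processing time at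
least `ε·d`, then some feasible assignment has early work at least `ε·m·d`; in particular
the maximum early work over feasible assignments is at least `ε·m·d`. -/
theorem many_long_jobs_early_work {n m : ℕ} (p : Fin n → ℕ) (hp : ∀ j, 1 ≤ p j)
    (d N : ℕ) (ε : ℝ) (hε0 : 0 < ε) (hε1 : ε ≤ 1) (hmn : n ≤ m * N)
    (hlong : m ≤ Set.ncard {j : Fin n | ε * (d : ℝ) ≤ (p j : ℝ)}) :
    (∃ μ : Fin n → Fin m, Feasible N μ ∧ ε * m * d ≤ (earlyWork p d μ : ℝ)) ∧
    ε * m * d ≤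
      ((sSup {x : ℕ | ∃ μ : Fin n → Fin m, Feasible N μ ∧ x = earlyWork p d μ} : ℕ) : ℝ) := by
  have main : ∃ μ : Fin n → Fin m, Feasible N μ ∧ ε * m * d ≤ (earlyWork p d μ : ℝ) := by
    rcases Nat.eq_zero_or_pos m with hm0 | hm
    · subst hm0
      have hn0 : n = 0 := by omega
      subst hn0
      refine ⟨fun j => j, fun i => by simp, ?_⟩
      simp
    · -- m > 0
      set S : Finset (Fin n) := univ.filter (fun j => ε * (d : ℝ) ≤ (p j : ℝ)) with hSdef
      have hS : m ≤ S.card := by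
        have : {j : Fin n | ε * (d : ℝ) ≤ (p j : ℝ)}.ncard = S.card := by
          rw [Set.ncard_eq_toFinset_card']
          congr 1
          ext j
          simp [hSdef]
        omega
      have hsum : S.card + Sᶜ.card = n := by
        have := Finset.card_add_card_compl S
        simpa using this
      let σ : Fin n ≃ Fin n :=
        (Equiv.sumCompl (· ∈ S)).symm.trans <|
          ((S.equivFin).sumCongr
            ((Equiv.subtypeEquivRight (fun x => (Finset.mem_compl (s := S)).symm)).trans
              Sᶜ.equivFin)).trans <|
            finSumFinEquiv.trans (finCongr hsum)
      have P1 : ∀ j : Fin n, j ∉ S → S.card ≤ (σ j : ℕ) := by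
        intro j hj
        simp only [σ, Equiv.trans_apply, Equiv.sumCompl_symm_apply_of_neg hj,
          Equiv.sumCongr_apply, Sum.map_inr, finSumFinEquiv_apply_right, finCongr_apply,
          Fin.coe_cast, Fin.coe_natAdd]
        omega
      have P2 : ∀ i : Fin n, (i : ℕ) < S.card → σ.symm i ∈ S := by
        intro i hi
        by_contra h
        have := P1 _ h
        rw [Equiv.apply_symm_apply] at this
        omega
      let μ : Fin n → Fin m := fun j => ⟨(σ j : ℕ) % m, Nat.mod_lt _ hm⟩
      have hfilter : ∀ i : Fin m,
          (univ.filter (fun j => μ j = i)).card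
            = (univ.filter (fun r : Fin n => (r : ℕ) % m = (i : ℕ))).card := by
        intro i
        refine Finset.card_bij' (fun j _ => σ j) (fun r _ => σ.symm r) ?_ ?_ ?_ ?_
        · intro j hj
          simp only [mem_filter, mem_univ, true_and] at hj ⊢
          exact congrArg Fin.val hj ▸ rfl
        · intro r hr
          simp only [mem_filter, mem_univ, true_and] at hr ⊢
          apply Fin.ext
          simpa [μ] using hr
        · intro j _; simp
        · intro r _; simp
      have hcard : ∀ i : Fin m,
          (univ.filter (fun r : Fin n => (r : ℕ) % m = (i : ℕ))).card ≤ N := by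
        intro i
        have : (univ.filter (fun r : Fin n => (r : ℕ) % m = (i : ℕ))).card
            ≤ (Finset.range N).card := by
          refine Finset.card_le_card_of_injOn (fun r => (r : ℕ) / m) ?_ ?_
          · intro r hr
            simp only [coe_filter, mem_univ, true_and, Set.mem_setOf_eq] at hr
            have hrn : (r : ℕ) < m * N := lt_of_lt_of_le r.2 hmn
            simp only [Finset.coe_range, Set.mem_Iio]
            exact Nat.div_lt_iff_lt_mul hm |>.2 (by rw [Nat.mul_comm] at hrn; omega)
          · intro r₁ h₁ r₂ h₂ hdiv
            simp only [coe_filter, Set.mem_setOf_eq] at h₁ h₂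
            apply Fin.ext
            simp only at hdiv
            have e₁ := Nat.div_add_mod (r₁ : ℕ) m
            have e₂ := Nat.div_add_mod (r₂ : ℕ) m
            rw [hdiv] at e₁
            omega
        simpa using this
      refine ⟨μ, fun i => (hfilter i) ▸ hcard i, ?_⟩
      have key : ∀ i : Fin m, ε * d ≤ ((min (machineLoad p μ i) d : ℕ) : ℝ) := by
        intro i
        have hin : (i : ℕ) < n := lt_of_lt_of_le i.2 (le_trans hS (by
          have := S.card_le_univ; simpa using this))
        set j := σ.symm ⟨(i : ℕ), hin⟩ with hj
        have hjS : j ∈ S := P2 _ (lt_of_lt_of_le i.2 hS)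
        have hμj : μ j = i := by
          apply Fin.ext
          simp only [μ, hj, Equiv.apply_symm_apply]
          exact Nat.mod_eq_of_lt i.2
        have hload : p j ≤ machineLoad p μ i := by
          apply Finset.single_le_sum (f := p) (fun k _ => Nat.zero_le _)
          simp [hμj]
        have hεd : ε * d ≤ (p j : ℝ) := by
          have := Finset.mem_filter.mp hjS
          exact this.2
        have hεd' : ε * d ≤ (d : ℝ) := by
          nlinarith [Nat.cast_nonneg (α := ℝ) d]
        push_cast [Nat.cast_min]
        rw [le_min_iff]
        constructor
        · exact le_trans hεd (by exact_mod_cast hload)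
        · exact hεd'
      calc ε * m * d = ∑ _i : Fin m, ε * d := by
            simp [mul_comm, mul_assoc, mul_left_comm]
        _ ≤ ∑ i : Fin m, ((min (machineLoad p μ i) d : ℕ) : ℝ) :=
            Finset.sum_le_sum fun i _ => key i
        _ = (earlyWork p d μ : ℝ) := by
            rw [earlyWork]; push_cast; ring_nf
  refine ⟨main, ?_⟩
  obtain ⟨μ, hfeas, hbound⟩ := main
  have hmem : earlyWork p d μ ∈
      {x : ℕ | ∃ μ : Fin n → Fin m, Feasible N μ ∧ x = earlyWork p d μ} := ⟨μ, hfeas, rfl⟩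
  have hbdd : BddAbove {x : ℕ | ∃ μ : Fin n → Fin m, Feasible N μ ∧ x = earlyWork p d μ} := by
    refine ⟨m * d, ?_⟩
    rintro x ⟨μ', _, rfl⟩
    exact earlyWork_le p d μ'
  have := le_csSup hbdd hmem
  calc ε * m * d ≤ (earlyWork p d μ : ℝ) := hbound
    _ ≤ _ := by exact_mod_cast this
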